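/- Let n ≥ 2, let I ⊆ {1,…,n} be nonempty, let p ≥ 1, and let J^0, …, J^{p−1} be pairwise disjoint nonempty subsets of {1,…,n} \ I. Define G^t = S_{n, J^{t mod p}} for t ≥ 0. Then for any t ≥ 0 and R ≥ 1, the iterated neighborhood satisfies: N_{G^t}(N_{G^{t+1}}(⋯ N_{G^{t+R−1}}(I) ⋯)) = (⋃_{t'=t}^{t+R−1} J^{t' mod p}) ∪ I if R ≤ p, and it equals {1,…,n} if R ≥ p + 1. -/

import Mathlib

set_option autoImplicit false
set_option maxHeartbeats 1000000

open Matrix MeasureTheory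

noncomputable section

/-- The all-ones vector in `ℝ^n`. -/
def onesVec (n : ℕ) : Fin n → ℝ := fun _ => 1

/-- The all-ones `n × n` matrix `𝟙𝟙ᵀ`. -/
def onesMat (n : ℕ) : Matrix (Fin n) (Fin n) ℝ := Matrix.of fun _ _ => (1 : ℝ)

/-- The averaging matrix `(1/n)𝟙𝟙ᵀ`. -/
def avgMat (n : ℕ) : Matrix (Fin n) (Fin n) ℝ := (n : ℝ)⁻¹ • onesMat n

/-- Spectral norm (largest singular value) of a real matrix. -/
def specNorm {m n : ℕ} (M : Matrix (Fin m) (Fin n) ℝ) : ℝ :=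
  ‖(Matrix.toEuclideanLin (𝕜 := ℝ) M).toContinuousLinearMap‖

/-- Frobenius norm of a real matrix. -/
def frobNorm {m n : ℕ} (M : Matrix (Fin m) (Fin n) ℝ) : ℝ :=
  Real.sqrt (∑ i, ∑ j, (M i j) ^ 2)

/-- The weight-matrix class `W_{n,β}`. -/
def memW (n : ℕ) (β : ℝ) (W : Matrix (Fin n) (Fin n) ℝ) : Prop :=
  W *ᵥ onesVec n = onesVec n ∧ onesVec n ᵥ* W = onesVec n ∧
    specNorm (W - avgMat n) ≤ β

/-- The sun-shaped graph `S_{n,C}`. -/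
def sunGraph (n : ℕ) (C : Finset (Fin n)) : SimpleGraph (Fin n) where
  Adj i j := i ≠ j ∧ (i ∈ C ∨ j ∈ C)
  symm := by
    constructor
    intro i j h
    exact ⟨fun hej => h.1 hej.symm, h.2.symm⟩
  loopless := by constructor; intro i h; exact h.1 rfl

instance (n : ℕ) (C : Finset (Fin n)) : DecidableRel (sunGraph n C).Adj :=
  fun i j => inferInstanceAs (Decidable (i ≠ j ∧ (i ∈ C ∨ j ∈ C)))

/-- One-step neighborhood `N_G(I)` (including `I` itself). -/
def nbhd {n : ℕ} (G : SimpleGraph (Fin n)) (I : Set (Fin n)) : Set (Fin n) :=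
  I ∪ {j | ∃ i ∈ I, G.Adj i j}

/-- Iterated neighborhood `N_{G^t}(N_{G^{t+1}}(⋯ N_{G^{t+R-1}}(I) ⋯))`. -/
def iterNbhd {n : ℕ} (G : ℕ → SimpleGraph (Fin n)) (t : ℕ) :
    ℕ → Set (Fin n) → Set (Fin n)
  | 0, I => I
  | R + 1, I => nbhd (G t) (iterNbhd G (t + 1) R I)

/-- Directed effective distance: smallest `R ≥ 1` such that a message sent from `i`
at some round `t` reaches `j` after `R` rounds. -/
def effDistOne {n : ℕ} (G : ℕ → SimpleGraph (Fin n)) (i j : Fin n) : ℕ :=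
  sInf {R | 1 ≤ R ∧ ∃ t, j ∈ iterNbhd G t R {i}}

/-- Effective distance between two nodes. -/
def effDistPair {n : ℕ} (G : ℕ → SimpleGraph (Fin n)) (i j : Fin n) : ℕ :=
  max (effDistOne G i j) (effDistOne G j i)

/-- Effective distance between two disjoint sets of nodes. -/
def effDistSets {n : ℕ} (G : ℕ → SimpleGraph (Fin n)) (I1 I2 : Set (Fin n)) : ℕ :=
  sInf {m | ∃ i ∈ I1, ∃ j ∈ I2, m = effDistPair G i j}


lemma nbhd_eq_union_aux {n : ℕ} (C : Finset (Fin n)) (I : Set (Fin n))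
    (hne : I.Nonempty) (hdisj : ∀ x ∈ I, x ∉ C) :
    nbhd (sunGraph n C) I = I ∪ ↑C := by
  ext j
  simp only [nbhd, sunGraph, Set.mem_union, Set.mem_setOf_eq, Finset.mem_coe]
  constructor
  · rintro (h | ⟨i, hi, hne', hC⟩)
    · exact Or.inl h
    · rcases hC with h | h
      · exact absurd h (hdisj i hi)
      · exact Or.inr h
  · rintro (h | h)
    · exact Or.inl h
    · obtain ⟨i, hi⟩ := hne
      by_cases hij : i = j
      · exact Or.inl (hij ▸ hi)
      · exact Or.inr ⟨i, hi, hij, Or.inr h⟩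

lemma nbhd_eq_univ_aux {n : ℕ} (C : Finset (Fin n)) (I : Set (Fin n))
    (h : ∃ i ∈ I, i ∈ C) :
    nbhd (sunGraph n C) I = Set.univ := by
  obtain ⟨i, hiI, hiC⟩ := h
  ext j
  simp only [Set.mem_univ, iff_true, nbhd, sunGraph, Set.mem_union, Set.mem_setOf_eq]
  by_cases hij : i = j
  · exact Or.inl (hij ▸ hiI)
  · exact Or.inr ⟨i, hiI, hij, Or.inl hiC⟩

/-- iterated neighborhoods of the rotating sun-shaped graph sequence
`G t = S_{n, J (t % p)}`: for a nonempty `I` disjoint from the pairwise disjoint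
nonempty center sets `J 0, …, J (p-1)`, the `R`-step iterated neighborhood of `I`
starting at round `t` equals `(⋃_{r < R} J ((t+r) % p)) ∪ I` when `1 ≤ R ≤ p`, and
equals the whole vertex set when `R ≥ p + 1`. -/
theorem iterNbhd_rotating_sunGraph (n : ℕ) (hn : 2 ≤ n)
    (I : Finset (Fin n)) (hI : I.Nonempty)
    (p : ℕ) (hp : 1 ≤ p)
    (J : ℕ → Finset (Fin n))
    (hJne : ∀ q < p, (J q).Nonempty)
    (hJsub : ∀ q < p, J q ⊆ Iᶜ)
    (hJdisj : ∀ q < p, ∀ q' < p, q ≠ q' → Disjoint (J q) (J q')) :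
    ∀ (t R : ℕ), 1 ≤ R →
      (R ≤ p →
        iterNbhd (fun s => sunGraph n (J (s % p))) t R ↑I
          = (⋃ r ∈ Finset.range R, (↑(J ((t + r) % p)) : Set (Fin n))) ∪ ↑I) ∧
      (p + 1 ≤ R →
        iterNbhd (fun s => sunGraph n (J (s % p))) t R ↑I = Set.univ) := by
  set G : ℕ → SimpleGraph (Fin n) := fun s => sunGraph n (J (s % p)) with hG
  have key : ∀ R t, 1 ≤ R → R ≤ p →
      iterNbhd G t R ↑I
        = (⋃ r ∈ Finset.range R, (↑(J ((t + r) % p)) : Set (Fin n))) ∪ ↑I := by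
    intro R
    induction R with
    | zero => intro t h1 _; exact absurd h1 (by omega)
    | succ R ih =>
      intro t _ hRp
      have hiter : iterNbhd G t (R + 1) ↑I = nbhd (G t) (iterNbhd G (t + 1) R ↑I) := rfl
      rcases Nat.eq_zero_or_pos R with h0 | hR1
      · subst h0
        rw [hiter]
        have h0' : iterNbhd G (t + 1) 0 (↑I : Set (Fin n)) = ↑I := rfl
        rw [h0']
        have hlt : t % p < p := Nat.mod_lt _ hp
        rw [show G t = sunGraph n (J (t % p)) from rfl,
          nbhd_eq_union_aux _ _ (by exact_mod_cast hI)
            (fun x hx hxC => by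
              have := hJsub (t % p) hlt hxC
              simp only [Finset.mem_compl] at this
              exact this (by exact_mod_cast hx))]
        ext x
        simp only [Set.mem_union, Set.mem_iUnion, Finset.mem_range, Finset.mem_coe]
        constructor
        · rintro (h | h)
          · exact Or.inr h
          · exact Or.inl ⟨0, by omega, by simpa using h⟩
        · rintro (⟨r, hr, h⟩ | h)
          · have : r = 0 := by omega
            subst this
            exact Or.inr (by simpa using h)
          · exact Or.inl h
      · rw [hiter, ih (t + 1) hR1 (by omega)]
        have hdisj' : ∀ x ∈ ((⋃ r ∈ Finset.range R,
            (↑(J ((t + 1 + r) % p)) : Set (Fin n))) ∪ ↑I), x ∉ J (t % p) := by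
          intro x hx hxC
          have hlt : t % p < p := Nat.mod_lt _ hp
          rcases hx with hx | hx
          · simp only [Set.mem_iUnion, Finset.mem_range, Finset.mem_coe] at hx
            obtain ⟨r, hr, hxJ⟩ := hx
            have hne : (t + 1 + r) % p ≠ t % p := by
              intro heq
              have hdvd : p ∣ (t + 1 + r) - t := by
                have := (Nat.modEq_iff_dvd' (by omega : t ≤ t + 1 + r)).mp
                  (heq.symm : t % p = (t + 1 + r) % p)
                exact this
              have : p ∣ r + 1 := by
                have hr1 : t + 1 + r - t = r + 1 := by omega
                rwa [hr1] at hdvd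
              have := Nat.le_of_dvd (by omega) this
              omega
            exact Finset.disjoint_left.mp (hJdisj _ (Nat.mod_lt _ hp) _ hlt hne) hxJ hxC
          · have := hJsub (t % p) hlt hxC
            simp only [Finset.mem_compl] at this
            exact this (by exact_mod_cast hx)
        rw [show G t = sunGraph n (J (t % p)) from rfl,
          nbhd_eq_union_aux _ _ ⟨hI.choose, Or.inr (by exact_mod_cast hI.choose_spec)⟩
            hdisj']
        ext x
        simp only [Set.mem_union, Set.mem_iUnion, Finset.mem_range, Finset.mem_coe]
        constructor
        · rintro ((⟨r, hr, h⟩ | h) | h)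
          · exact Or.inl ⟨r + 1, by omega, by rw [show t + (r + 1) = t + 1 + r by omega]; exact h⟩
          · exact Or.inr h
          · exact Or.inl ⟨0, by omega, by simpa using h⟩
        · rintro (⟨r, hr, h⟩ | h)
          · rcases Nat.eq_zero_or_pos r with h0 | hr1
            · subst h0
              exact Or.inr (by simpa using h)
            · exact Or.inl (Or.inl ⟨r - 1, by omega,
                by rw [show t + 1 + (r - 1) = t + r by omega]; exact h⟩)
          · exact Or.inl (Or.inr h)
  have key2 : ∀ R t, p + 1 ≤ R → iterNbhd G t R ↑I = Set.univ := by
    intro R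
    induction R with
    | zero => intro t h; exact absurd h (by omega)
    | succ R ih =>
      intro t hR
      have hiter : iterNbhd G t (R + 1) ↑I = nbhd (G t) (iterNbhd G (t + 1) R ↑I) := rfl
      rcases Nat.lt_or_ge R (p + 1) with h | h
      · have hRp : R = p := by omega
        rw [hiter, hRp, key p (t + 1) hp le_rfl]
        obtain ⟨i, hi⟩ := hJne (t % p) (Nat.mod_lt _ hp)
        refine nbhd_eq_univ_aux _ _ ⟨i, Or.inl ?_, hi⟩
        simp only [Set.mem_iUnion, Finset.mem_range, Finset.mem_coe]
        refine ⟨p - 1, by omega, ?_⟩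
        rw [show t + 1 + (p - 1) = t + p by omega, Nat.add_mod_right]
        exact hi
      · rw [hiter, ih (t + 1) h]
        simp [nbhd]
  intro t R hR
  exact ⟨fun h => key R t hR h, fun h => key2 R t h⟩

end
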